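/- arXiv:0906.0239 — 2 statements merged into one kernel-verified Lean document; each statement's English description precedes it below -/
import Mathlib

section
/- Let $H$ be a Hopf algebra with antipode $S$, $C$ a coalgebra in the Yetter-Drinfeld category ${}^H_H\mathcal{YD}$, and $\alpha : C \to H$ a dual normalized Sweedler 1-cocycle, i.e. $\alpha(x)_{(1)} \otimes \alpha(x)_{(2)} = \alpha(x^{(1)})\,x^{(2)}_{\langle -1\rangle} \otimes \alpha(x^{(2)}_{\langle 0\rangle})$ and $\varepsilon_H\alpha = \varepsilon_C$. Then $\alpha$ is convolution invertible with inverse $\alpha'(x) = x_{\langle -1\rangle}\, S(\alpha(x_{\langle 0\rangle}))$. -/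
open TensorProduct

/-- Convolution product on linear maps `C → H`. -/
noncomputable def convH {K H C : Type*} [CommRing K] [Ring H] [HopfAlgebra K H]
    [AddCommGroup C] [Module K C] [Coalgebra K C] (f g : C →ₗ[K] H) : C →ₗ[K] H :=
  (LinearMap.mul' K H) ∘ₗ (TensorProduct.map f g) ∘ₗ Coalgebra.comul

open Coalgebra HopfAlgebra

section Anti
variable (K H : Type*) [CommRing K] [Ring H] [HopfAlgebra K H]

noncomputable def xiH : ((H ⊗[K] H) ⊗[K] (H ⊗[K] H)) →ₗ[K] H :=
  LinearMap.mul' K H ∘ₗ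
    TensorProduct.map (LinearMap.mul' K H)
      (LinearMap.mul' K H ∘ₗ
        TensorProduct.map (HopfAlgebra.antipode (R := K)) (HopfAlgebra.antipode (R := K)) ∘ₗ
        (TensorProduct.comm K H H).toLinearMap) ∘ₗ
    (TensorProduct.tensorTensorTensorComm K H H H H).toLinearMap

variable {K H}

lemma xiH_tmul (y z v w : H) :
    xiH K H ((y ⊗ₜ[K] z) ⊗ₜ[K] (v ⊗ₜ[K] w)) =
      (y * v) * (HopfAlgebra.antipode (R := K) w * HopfAlgebra.antipode (R := K) z) := by
  simp [xiH, LinearMap.mul'_apply]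

lemma xiH_comul_comul (x y : H) :
    xiH K H (Coalgebra.comul (R := K) x ⊗ₜ[K] Coalgebra.comul (R := K) y) =
      (Coalgebra.counit (R := K) x * Coalgebra.counit (R := K) y) • (1 : H) := by
  set S := HopfAlgebra.antipode (R := K) (A := H)
  let rx := Coalgebra.Repr.arbitrary K x
  let ry := Coalgebra.Repr.arbitrary K y
  rw [← rx.eq, ← ry.eq, TensorProduct.sum_tmul]
  simp_rw [TensorProduct.tmul_sum, map_sum, xiH_tmul]
  calc ∑ i ∈ rx.index, ∑ j ∈ ry.index,
        (rx.left i * ry.left j) * (S (ry.right j) * S (rx.right i))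
      = ∑ i ∈ rx.index,
          rx.left i * ((∑ j ∈ ry.index, ry.left j * S (ry.right j)) * S (rx.right i)) := by
        refine Finset.sum_congr rfl fun i _ => ?_
        rw [Finset.sum_mul, Finset.mul_sum]
        exact Finset.sum_congr rfl fun j _ => by simp only [mul_assoc]
    _ = ∑ i ∈ rx.index, rx.left i * ((Coalgebra.counit (R := K) y • 1) * S (rx.right i)) := by
        rw [HopfAlgebra.sum_mul_antipode_eq_smul ry]
    _ = Coalgebra.counit (R := K) y • ∑ i ∈ rx.index, rx.left i * S (rx.right i) := by
        rw [Finset.smul_sum]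
        exact Finset.sum_congr rfl fun i _ => by
          rw [smul_mul_assoc, one_mul, mul_smul_comm]
    _ = Coalgebra.counit (R := K) y • (Coalgebra.counit (R := K) x • (1 : H)) := by
        rw [HopfAlgebra.sum_mul_antipode_eq_smul rx]
    _ = (Coalgebra.counit (R := K) x * Coalgebra.counit (R := K) y) • (1 : H) := by
        rw [smul_smul, mul_comm]
lemma sum_smul_counit_right {a : H} {ι : Type*} (r : Coalgebra.Repr K a ι) :
    ∑ i ∈ r.index, Coalgebra.counit (R := K) (r.right i) • r.left i = a := by
  have h := Coalgebra.lTensor_counit_comul (R := K) a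
  rw [← r.eq, map_sum] at h
  have h2 := congrArg (TensorProduct.rid K H) h
  rw [map_sum] at h2
  simp only [LinearMap.lTensor_tmul, TensorProduct.rid_tmul] at h2
  simpa using h2

lemma sum_smul_counit_left {a : H} {ι : Type*} (r : Coalgebra.Repr K a ι) :
    ∑ i ∈ r.index, Coalgebra.counit (R := K) (r.left i) • r.right i = a := by
  have h := Coalgebra.rTensor_counit_comul (R := K) a
  rw [← r.eq, map_sum] at h
  have h2 := congrArg (TensorProduct.lid K H) h
  rw [map_sum] at h2
  simp only [LinearMap.rTensor_tmul, TensorProduct.lid_tmul] at h2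
  simpa using h2

noncomputable def mulRepr {x y : H} {ι₁ ι₂ : Type*} (rx : Coalgebra.Repr K x ι₁) (ry : Coalgebra.Repr K y ι₂) :
    Coalgebra.Repr K (x * y) (ι₁ × ι₂) where
  index := rx.index ×ˢ ry.index
  left := fun p => rx.left p.1 * ry.left p.2
  right := fun p => rx.right p.1 * ry.right p.2
  eq := by
    rw [Finset.sum_product, Bialgebra.comul_mul, ← rx.eq, ← ry.eq, Finset.sum_mul_sum]
    simp [Algebra.TensorProduct.tmul_mul_tmul]

lemma L1' {x y : H} {ι₁ ι₂ : Type*} (rx : Coalgebra.Repr K x ι₁) (ry : Coalgebra.Repr K y ι₂) :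
    ∑ i ∈ rx.index, ∑ j ∈ ry.index,
      HopfAlgebra.antipode (R := K) (rx.left i * ry.left j) * (rx.right i * ry.right j) =
      (Coalgebra.counit (R := K) x * Coalgebra.counit (R := K) y) • (1 : H) := by
  have h := HopfAlgebra.sum_antipode_mul_eq_smul (R := K) (mulRepr rx ry)
  simp only [mulRepr, Finset.sum_product, Bialgebra.counit_mul] at h
  exact h

variable (K H) in
noncomputable def XiH : ((H ⊗[K] (H ⊗[K] H)) ⊗[K] (H ⊗[K] (H ⊗[K] H))) →ₗ[K] H :=
  LinearMap.mul' K H ∘ₗ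
    TensorProduct.map (HopfAlgebra.antipode (R := K) ∘ₗ LinearMap.mul' K H) (xiH K H) ∘ₗ
    (TensorProduct.tensorTensorTensorComm K H (H ⊗[K] H) H (H ⊗[K] H)).toLinearMap

lemma XiH_tmul (x : H) (t : H ⊗[K] H) (u : H) (s : H ⊗[K] H) :
    XiH K H ((x ⊗ₜ[K] t) ⊗ₜ[K] (u ⊗ₜ[K] s)) =
      HopfAlgebra.antipode (R := K) (x * u) * xiH K H (t ⊗ₜ[K] s) := by
  simp [XiH, LinearMap.mul'_apply]


theorem antipode_anti (a b : H) :
    HopfAlgebra.antipode (R := K) (a * b) =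
      HopfAlgebra.antipode (R := K) b * HopfAlgebra.antipode (R := K) (A := H) a := by
  let ra := Coalgebra.Repr.arbitrary K a
  let rb := Coalgebra.Repr.arbitrary K b
  let rc : ∀ i, Coalgebra.Repr K (ra.left i) (H × H) := fun i => Coalgebra.Repr.arbitrary K _
  let rd : ∀ j, Coalgebra.Repr K (rb.left j) (H × H) := fun j => Coalgebra.Repr.arbitrary K _
  have e1 : ∀ (x : H) (r : Coalgebra.Repr K x (H × H)),
      (Coalgebra.comul (R := K) (A := H)).lTensor H (Coalgebra.comul x) =
        ∑ i ∈ r.index, r.left i ⊗ₜ[K] Coalgebra.comul (R := K) (r.right i) := by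
    intro x r
    rw [← r.eq, map_sum]
    exact Finset.sum_congr rfl fun i _ => by rw [LinearMap.lTensor_tmul]
  have e2 : ∀ (x : H) (r : Coalgebra.Repr K x (H × H)) (rr : ∀ i, Coalgebra.Repr K (r.left i) (H × H)),
      (Coalgebra.comul (R := K) (A := H)).lTensor H (Coalgebra.comul x) =
        ∑ i ∈ r.index, ∑ k ∈ (rr i).index,
          (rr i).left k ⊗ₜ[K] ((rr i).right k ⊗ₜ[K] r.right i) := by
    intro x r rr
    rw [← Coalgebra.coassoc_apply, ← r.eq, map_sum, map_sum]
    refine Finset.sum_congr rfl fun i _ => ?_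
    rw [LinearMap.rTensor_tmul, ← (rr i).eq, TensorProduct.sum_tmul, map_sum]
    exact Finset.sum_congr rfl fun k _ => by rw [TensorProduct.assoc_tmul]
  have key1 : XiH K H
      (((Coalgebra.comul (R := K) (A := H)).lTensor H (Coalgebra.comul a)) ⊗ₜ[K]
        ((Coalgebra.comul (R := K) (A := H)).lTensor H (Coalgebra.comul b))) =
      HopfAlgebra.antipode (R := K) (a * b) := by
    rw [e1 a ra, e1 b rb, TensorProduct.sum_tmul]
    simp_rw [TensorProduct.tmul_sum, map_sum, XiH_tmul, xiH_comul_comul, mul_smul_comm, mul_one]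
    conv_rhs => rw [← sum_smul_counit_right ra, ← sum_smul_counit_right rb,
      Finset.sum_mul_sum, map_sum]
    simp_rw [map_sum, smul_mul_assoc, mul_smul_comm, map_smul, smul_smul]
  have key2 : XiH K H
      (((Coalgebra.comul (R := K) (A := H)).lTensor H (Coalgebra.comul a)) ⊗ₜ[K]
        ((Coalgebra.comul (R := K) (A := H)).lTensor H (Coalgebra.comul b))) =
      HopfAlgebra.antipode (R := K) b * HopfAlgebra.antipode (R := K) (A := H) a := by
    rw [e2 a ra rc, e2 b rb rd, TensorProduct.sum_tmul]
    simp_rw [TensorProduct.sum_tmul, TensorProduct.tmul_sum, map_sum, XiH_tmul, xiH_tmul]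
    calc ∑ i ∈ ra.index, ∑ k ∈ (rc i).index, ∑ j ∈ rb.index, ∑ l ∈ (rd j).index,
          HopfAlgebra.antipode (R := K) ((rc i).left k * (rd j).left l) *
            (((rc i).right k * (rd j).right l) *
              (HopfAlgebra.antipode (R := K) (rb.right j) *
                HopfAlgebra.antipode (R := K) (A := H) (ra.right i)))
        = ∑ i ∈ ra.index, ∑ j ∈ rb.index,
            (∑ k ∈ (rc i).index, ∑ l ∈ (rd j).index,
              HopfAlgebra.antipode (R := K) ((rc i).left k * (rd j).left l) *
                ((rc i).right k * (rd j).right l)) *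
              (HopfAlgebra.antipode (R := K) (rb.right j) *
                HopfAlgebra.antipode (R := K) (A := H) (ra.right i)) := by
          refine Finset.sum_congr rfl fun i _ => ?_
          rw [Finset.sum_comm]
          refine Finset.sum_congr rfl fun j _ => ?_
          rw [Finset.sum_mul]
          refine Finset.sum_congr rfl fun k _ => ?_
          rw [Finset.sum_mul]
          exact Finset.sum_congr rfl fun l _ => (mul_assoc _ _ _).symm
      _ = ∑ i ∈ ra.index, ∑ j ∈ rb.index,
            (Coalgebra.counit (R := K) (ra.left i) * Coalgebra.counit (R := K) (rb.left j)) •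
              (HopfAlgebra.antipode (R := K) (rb.right j) *
                HopfAlgebra.antipode (R := K) (A := H) (ra.right i)) := by
          refine Finset.sum_congr rfl fun i _ => Finset.sum_congr rfl fun j _ => ?_
          rw [L1' (rc i) (rd j), smul_mul_assoc, one_mul]
      _ = HopfAlgebra.antipode (R := K) b * HopfAlgebra.antipode (R := K) (A := H) a := by
          conv_rhs => rw [← sum_smul_counit_left rb, ← sum_smul_counit_left ra,
            map_sum, map_sum, Finset.sum_mul_sum]
          rw [Finset.sum_comm]
          simp_rw [map_smul, smul_mul_assoc, mul_smul_comm, smul_smul, mul_comm]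
  rw [← key1, key2]


end Anti

section Main
variable {K H C : Type*} [CommRing K] [Ring H] [HopfAlgebra K H]
  [AddCommGroup C] [Module K C] [Coalgebra K C]

lemma dir1 (ρ : C →ₗ[K] H ⊗[K] C) (α : C →ₗ[K] H)
    (hΔα : (Coalgebra.comul (R := K) (A := H)) ∘ₗ α =
      (TensorProduct.map (LinearMap.mul' K H) α) ∘ₗ
        (TensorProduct.assoc K H H C).symm.toLinearMap ∘ₗ
        (TensorProduct.map α ρ) ∘ₗ Coalgebra.comul)
    (hεα : (Coalgebra.counit (R := K) (A := H)) ∘ₗ α = Coalgebra.counit) :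
    convH α ((LinearMap.mul' K H) ∘ₗ
        (TensorProduct.map LinearMap.id ((HopfAlgebra.antipode (R := K)) ∘ₗ α)) ∘ₗ ρ) =
      (Algebra.linearMap K H) ∘ₗ Coalgebra.counit := by
  -- bridge lemma
  have B : (LinearMap.mul' K H) ∘ₗ
        (TensorProduct.map LinearMap.id
          ((LinearMap.mul' K H) ∘ₗ
            (TensorProduct.map LinearMap.id ((HopfAlgebra.antipode (R := K)) ∘ₗ α)))) =
      (LinearMap.mul' K H) ∘ₗ
        (TensorProduct.map LinearMap.id (HopfAlgebra.antipode (R := K))) ∘ₗ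
        (TensorProduct.map (LinearMap.mul' K H) α) ∘ₗ
        (TensorProduct.assoc K H H C).symm.toLinearMap := by
    ext h' h w
    simp [LinearMap.mul'_apply, mul_assoc]
  have M1 : TensorProduct.map α ((LinearMap.mul' K H) ∘ₗ
        (TensorProduct.map LinearMap.id ((HopfAlgebra.antipode (R := K)) ∘ₗ α)) ∘ₗ ρ) =
      (TensorProduct.map LinearMap.id
          ((LinearMap.mul' K H) ∘ₗ
            (TensorProduct.map LinearMap.id ((HopfAlgebra.antipode (R := K)) ∘ₗ α)))) ∘ₗ
        (TensorProduct.map α ρ) := by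
    rw [← TensorProduct.map_comp, LinearMap.id_comp, LinearMap.comp_assoc]
  ext x
  simp only [convH, LinearMap.comp_apply, Algebra.linearMap_apply]
  rw [LinearMap.congr_fun M1 (Coalgebra.comul x)]
  simp only [LinearMap.comp_apply]
  have hB := LinearMap.congr_fun B ((TensorProduct.map α ρ) (Coalgebra.comul x))
  simp only [LinearMap.comp_apply] at hB
  rw [hB]
  have h0 := LinearMap.congr_fun hΔα x
  simp only [LinearMap.comp_apply] at h0
  rw [← h0]
  have : (TensorProduct.map LinearMap.id (HopfAlgebra.antipode (R := K) (A := H))) =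
      (HopfAlgebra.antipode (R := K) (A := H)).lTensor H := rfl
  rw [this, HopfAlgebra.mul_antipode_lTensor_comul_apply]
  rw [show Coalgebra.counit (R := K) (α x) = Coalgebra.counit (R := K) x from
    LinearMap.congr_fun hεα x]

lemma dir2 (ρ : C →ₗ[K] H ⊗[K] C) (α : C →ₗ[K] H)
    (hcounit : (TensorProduct.lid K C).toLinearMap ∘ₗ
        (TensorProduct.map Coalgebra.counit LinearMap.id) ∘ₗ ρ = LinearMap.id)
    (hcoassoc : (TensorProduct.map Coalgebra.comul LinearMap.id) ∘ₗ ρ =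
      (TensorProduct.assoc K H H C).symm.toLinearMap ∘ₗ
        (TensorProduct.map LinearMap.id ρ) ∘ₗ ρ)
    (hcompΔ : (TensorProduct.map LinearMap.id Coalgebra.comul) ∘ₗ ρ =
      (TensorProduct.map (LinearMap.mul' K H) LinearMap.id) ∘ₗ
        (TensorProduct.tensorTensorTensorComm K H C H C).toLinearMap ∘ₗ
        (TensorProduct.map ρ ρ) ∘ₗ Coalgebra.comul)
    (hcompε : (TensorProduct.rid K H).toLinearMap ∘ₗ
        (TensorProduct.map LinearMap.id Coalgebra.counit) ∘ₗ ρ =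
      (Algebra.linearMap K H) ∘ₗ Coalgebra.counit)
    (hΔα : (Coalgebra.comul (R := K) (A := H)) ∘ₗ α =
      (TensorProduct.map (LinearMap.mul' K H) α) ∘ₗ
        (TensorProduct.assoc K H H C).symm.toLinearMap ∘ₗ
        (TensorProduct.map α ρ) ∘ₗ Coalgebra.comul)
    (hεα : (Coalgebra.counit (R := K) (A := H)) ∘ₗ α = Coalgebra.counit) :
    convH ((LinearMap.mul' K H) ∘ₗ
        (TensorProduct.map LinearMap.id ((HopfAlgebra.antipode (R := K)) ∘ₗ α)) ∘ₗ ρ) α =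
      (Algebra.linearMap K H) ∘ₗ Coalgebra.counit := by
  have hα : (α ∘ₗ (TensorProduct.lid K C).toLinearMap ∘ₗ TensorProduct.map (Coalgebra.counit (R := K) (A := H)) LinearMap.id) ∘ₗ ρ = α := by
    simp only [LinearMap.comp_assoc]
    rw [hcounit, LinearMap.comp_id]
  have M2 : TensorProduct.map ((LinearMap.mul' K H) ∘ₗ TensorProduct.map LinearMap.id ((HopfAlgebra.antipode (R := K) (A := H)) ∘ₗ α) ∘ₗ ρ) α =
      TensorProduct.map ((LinearMap.mul' K H) ∘ₗ TensorProduct.map LinearMap.id ((HopfAlgebra.antipode (R := K) (A := H)) ∘ₗ α)) (α ∘ₗ (TensorProduct.lid K C).toLinearMap ∘ₗ TensorProduct.map (Coalgebra.counit (R := K) (A := H)) LinearMap.id) ∘ₗ TensorProduct.map ρ ρ := by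
    have h1 : (LinearMap.mul' K H) ∘ₗ TensorProduct.map LinearMap.id ((HopfAlgebra.antipode (R := K) (A := H)) ∘ₗ α) ∘ₗ ρ = ((LinearMap.mul' K H) ∘ₗ TensorProduct.map LinearMap.id ((HopfAlgebra.antipode (R := K) (A := H)) ∘ₗ α)) ∘ₗ ρ := by
      simp only [LinearMap.comp_assoc]
    rw [h1, congrArg (TensorProduct.map (((LinearMap.mul' K H) ∘ₗ TensorProduct.map LinearMap.id ((HopfAlgebra.antipode (R := K) (A := H)) ∘ₗ α)) ∘ₗ ρ)) hα.symm]
    exact TensorProduct.map_comp ((LinearMap.mul' K H) ∘ₗ TensorProduct.map LinearMap.id ((HopfAlgebra.antipode (R := K) (A := H)) ∘ₗ α)) (α ∘ₗ (TensorProduct.lid K C).toLinearMap ∘ₗ TensorProduct.map (Coalgebra.counit (R := K) (A := H)) LinearMap.id) ρ ρ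
  have B2 : (LinearMap.mul' K H) ∘ₗ TensorProduct.map ((LinearMap.mul' K H) ∘ₗ TensorProduct.map LinearMap.id ((HopfAlgebra.antipode (R := K) (A := H)) ∘ₗ α)) (α ∘ₗ (TensorProduct.lid K C).toLinearMap ∘ₗ TensorProduct.map (Coalgebra.counit (R := K) (A := H)) LinearMap.id) =
      (LinearMap.mul' K H) ∘ₗ TensorProduct.map ((LinearMap.mul' K H) ∘ₗ TensorProduct.map LinearMap.id ((Algebra.linearMap K H) ∘ₗ (Coalgebra.counit (R := K) (A := H)))) ((LinearMap.mul' K H) ∘ₗ TensorProduct.map ((HopfAlgebra.antipode (R := K) (A := H)) ∘ₗ α) α) ∘ₗ (TensorProduct.tensorTensorTensorComm K H C H C).toLinearMap := by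
    ext h z g w
    simp only [AlgebraTensorModule.curry_apply, TensorProduct.curry_apply,
      LinearMap.coe_restrictScalars, LinearMap.comp_apply, TensorProduct.map_tmul,
      LinearMap.id_coe, id_eq, TensorProduct.assoc_symm_tmul, LinearEquiv.coe_coe,
      TensorProduct.tensorTensorTensorComm_tmul, LinearMap.mul'_apply,
      Algebra.linearMap_apply, TensorProduct.lid_tmul]
    simp [Algebra.algebraMap_eq_smul_one, smul_mul_assoc, mul_smul_comm, mul_assoc]
  have C3 : (LinearMap.mul' K H) ∘ₗ TensorProduct.map ((LinearMap.mul' K H) ∘ₗ TensorProduct.map LinearMap.id ((Algebra.linearMap K H) ∘ₗ (Coalgebra.counit (R := K) (A := H)))) ((LinearMap.mul' K H) ∘ₗ TensorProduct.map ((HopfAlgebra.antipode (R := K) (A := H)) ∘ₗ α) α) ∘ₗ (TensorProduct.tensorTensorTensorComm K H C H C).toLinearMap =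
      ((LinearMap.mul' K H) ∘ₗ TensorProduct.map ((LinearMap.mul' K H) ∘ₗ TensorProduct.map LinearMap.id ((LinearMap.mul' K H) ∘ₗ TensorProduct.map LinearMap.id (HopfAlgebra.antipode (R := K) (A := H)))) ((LinearMap.mul' K H) ∘ₗ TensorProduct.map ((HopfAlgebra.antipode (R := K) (A := H)) ∘ₗ α) α) ∘ₗ (TensorProduct.tensorTensorTensorComm K H C (H ⊗[K] H) C).toLinearMap) ∘ₗ
        TensorProduct.map LinearMap.id (TensorProduct.map (Coalgebra.comul (R := K) (A := H)) LinearMap.id) := by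
    ext h z g w
    simp only [AlgebraTensorModule.curry_apply, TensorProduct.curry_apply,
      LinearMap.coe_restrictScalars, LinearMap.comp_apply, TensorProduct.map_tmul,
      LinearMap.id_coe, id_eq, TensorProduct.assoc_symm_tmul, LinearEquiv.coe_coe,
      TensorProduct.tensorTensorTensorComm_tmul, LinearMap.mul'_apply,
      Algebra.linearMap_apply, TensorProduct.lid_tmul]
    have hg : (LinearMap.mul' K H) ((TensorProduct.map LinearMap.id (HopfAlgebra.antipode (R := K) (A := H))) ((Coalgebra.comul (R := K) (A := H)) g)) =
        algebraMap K H ((Coalgebra.counit (R := K) (A := H)) g) := HopfAlgebra.mul_antipode_lTensor_comul_apply g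
    rw [hg]
  have M4 : TensorProduct.map LinearMap.id (TensorProduct.map (Coalgebra.comul (R := K) (A := H)) LinearMap.id) ∘ₗ
        TensorProduct.map ρ ρ =
      TensorProduct.map (LinearMap.id : H ⊗[K] C →ₗ[K] H ⊗[K] C) (TensorProduct.assoc K H H C).symm.toLinearMap ∘ₗ
        TensorProduct.map LinearMap.id (TensorProduct.map LinearMap.id ρ) ∘ₗ TensorProduct.map ρ ρ := by
    ext x y
    simp only [AlgebraTensorModule.curry_apply, TensorProduct.curry_apply,
      LinearMap.coe_restrictScalars, LinearMap.comp_apply, TensorProduct.map_tmul,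
      LinearMap.id_coe, id_eq]
    congr 1
    have h2 := LinearMap.congr_fun hcoassoc y
    simp only [LinearMap.comp_apply, LinearEquiv.coe_coe] at h2 ⊢
    exact h2
  have C5 : ((LinearMap.mul' K H) ∘ₗ TensorProduct.map ((LinearMap.mul' K H) ∘ₗ TensorProduct.map LinearMap.id ((LinearMap.mul' K H) ∘ₗ TensorProduct.map LinearMap.id (HopfAlgebra.antipode (R := K) (A := H)))) ((LinearMap.mul' K H) ∘ₗ TensorProduct.map ((HopfAlgebra.antipode (R := K) (A := H)) ∘ₗ α) α) ∘ₗ (TensorProduct.tensorTensorTensorComm K H C (H ⊗[K] H) C).toLinearMap) ∘ₗ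
        TensorProduct.map (LinearMap.id : H ⊗[K] C →ₗ[K] H ⊗[K] C) (TensorProduct.assoc K H H C).symm.toLinearMap =
      (LinearMap.mul' K H) ∘ₗ TensorProduct.map (LinearMap.mul' K H) ((LinearMap.mul' K H) ∘ₗ TensorProduct.map (HopfAlgebra.antipode (R := K) (A := H)) LinearMap.id ∘ₗ TensorProduct.map (LinearMap.mul' K H) α ∘ₗ (TensorProduct.assoc K H H C).symm.toLinearMap ∘ₗ TensorProduct.map α (LinearMap.id : H ⊗[K] C →ₗ[K] H ⊗[K] C)) ∘ₗ (TensorProduct.tensorTensorTensorComm K H C H (H ⊗[K] C)).toLinearMap := by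
    ext h z g k w
    simp only [AlgebraTensorModule.curry_apply, TensorProduct.curry_apply,
      LinearMap.coe_restrictScalars, LinearMap.comp_apply, TensorProduct.map_tmul,
      LinearMap.id_coe, id_eq, TensorProduct.assoc_symm_tmul, LinearEquiv.coe_coe,
      TensorProduct.tensorTensorTensorComm_tmul, LinearMap.mul'_apply,
      Algebra.linearMap_apply, TensorProduct.lid_tmul]
    rw [antipode_anti (α z) k]
    simp only [mul_assoc]
  have M6 : (TensorProduct.tensorTensorTensorComm K H C H (H ⊗[K] C)).toLinearMap ∘ₗ TensorProduct.map (LinearMap.id : H ⊗[K] C →ₗ[K] H ⊗[K] C) (TensorProduct.map LinearMap.id ρ) =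
      TensorProduct.map LinearMap.id (TensorProduct.map LinearMap.id ρ) ∘ₗ (TensorProduct.tensorTensorTensorComm K H C H C).toLinearMap := by
    ext a z b w
    simp
  have M8 : TensorProduct.map (LinearMap.mul' K H) ((LinearMap.mul' K H) ∘ₗ TensorProduct.map (HopfAlgebra.antipode (R := K) (A := H)) LinearMap.id ∘ₗ TensorProduct.map (LinearMap.mul' K H) α ∘ₗ (TensorProduct.assoc K H H C).symm.toLinearMap ∘ₗ TensorProduct.map α (LinearMap.id : H ⊗[K] C →ₗ[K] H ⊗[K] C)) ∘ₗ
        TensorProduct.map LinearMap.id (TensorProduct.map LinearMap.id ρ) =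
      TensorProduct.map LinearMap.id (((LinearMap.mul' K H) ∘ₗ TensorProduct.map (HopfAlgebra.antipode (R := K) (A := H)) LinearMap.id ∘ₗ TensorProduct.map (LinearMap.mul' K H) α ∘ₗ (TensorProduct.assoc K H H C).symm.toLinearMap ∘ₗ TensorProduct.map α (LinearMap.id : H ⊗[K] C →ₗ[K] H ⊗[K] C)) ∘ₗ TensorProduct.map LinearMap.id ρ) ∘ₗ
        TensorProduct.map (LinearMap.mul' K H) LinearMap.id := by
    rw [← TensorProduct.map_comp, ← TensorProduct.map_comp, LinearMap.comp_id,
      LinearMap.id_comp, LinearMap.comp_id]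
  have M9 : TensorProduct.map LinearMap.id (((LinearMap.mul' K H) ∘ₗ TensorProduct.map (HopfAlgebra.antipode (R := K) (A := H)) LinearMap.id ∘ₗ TensorProduct.map (LinearMap.mul' K H) α ∘ₗ (TensorProduct.assoc K H H C).symm.toLinearMap ∘ₗ TensorProduct.map α (LinearMap.id : H ⊗[K] C →ₗ[K] H ⊗[K] C)) ∘ₗ TensorProduct.map LinearMap.id ρ) ∘ₗ
        TensorProduct.map (LinearMap.id : H →ₗ[K] H) (Coalgebra.comul (R := K) (A := C)) =
      TensorProduct.map (LinearMap.id : H →ₗ[K] H) (((LinearMap.mul' K H) ∘ₗ TensorProduct.map (HopfAlgebra.antipode (R := K) (A := H)) LinearMap.id ∘ₗ TensorProduct.map (LinearMap.mul' K H) α ∘ₗ (TensorProduct.assoc K H H C).symm.toLinearMap ∘ₗ TensorProduct.map α (LinearMap.id : H ⊗[K] C →ₗ[K] H ⊗[K] C)) ∘ₗ TensorProduct.map LinearMap.id ρ ∘ₗ (Coalgebra.comul (R := K) (A := C))) := by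
    rw [← TensorProduct.map_comp, LinearMap.id_comp, LinearMap.comp_assoc]
  have HP : ∀ y : C, ((LinearMap.mul' K H) ∘ₗ TensorProduct.map (HopfAlgebra.antipode (R := K) (A := H)) LinearMap.id ∘ₗ TensorProduct.map (LinearMap.mul' K H) α ∘ₗ (TensorProduct.assoc K H H C).symm.toLinearMap ∘ₗ TensorProduct.map α (LinearMap.id : H ⊗[K] C →ₗ[K] H ⊗[K] C)) ((TensorProduct.map LinearMap.id ρ) ((Coalgebra.comul (R := K) (A := C)) y)) =
      algebraMap K H ((Coalgebra.counit (R := K) (A := C)) y) := by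
    intro y
    have h1 : (TensorProduct.map α (LinearMap.id : H ⊗[K] C →ₗ[K] H ⊗[K] C)) ((TensorProduct.map LinearMap.id ρ) ((Coalgebra.comul (R := K) (A := C)) y)) =
        (TensorProduct.map α ρ) ((Coalgebra.comul (R := K) (A := C)) y) := by
      have : TensorProduct.map α (LinearMap.id : H ⊗[K] C →ₗ[K] H ⊗[K] C) ∘ₗ TensorProduct.map LinearMap.id ρ =
          TensorProduct.map α ρ := by
        rw [← TensorProduct.map_comp, LinearMap.comp_id, LinearMap.id_comp]
      exact LinearMap.congr_fun this ((Coalgebra.comul (R := K) (A := C)) y)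
    simp only [LinearMap.comp_apply]
    rw [h1]
    have h2 := LinearMap.congr_fun hΔα y
    simp only [LinearMap.comp_apply] at h2
    rw [← h2]
    have h3 : (LinearMap.mul' K H) ((TensorProduct.map (HopfAlgebra.antipode (R := K) (A := H)) LinearMap.id) ((Coalgebra.comul (R := K) (A := H)) (α y))) =
        algebraMap K H ((Coalgebra.counit (R := K) (A := H)) (α y)) := HopfAlgebra.mul_antipode_rTensor_comul_apply (α y)
    have h4 := LinearMap.congr_fun hεα y
    simp only [LinearMap.comp_apply] at h4
    rw [h3, h4]
  have M7 : (LinearMap.mul' K H) ∘ₗ TensorProduct.map (LinearMap.id : H →ₗ[K] H) (Algebra.linearMap K H) = (TensorProduct.rid K H).toLinearMap := by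
    ext h k
    simp [Algebra.algebraMap_eq_smul_one, mul_smul_comm]
  -- main chain
  ext x
  simp only [convH, LinearMap.comp_apply, Algebra.linearMap_apply]
  rw [LinearMap.congr_fun M2 ((Coalgebra.comul (R := K) (A := C)) x)]
  simp only [LinearMap.comp_apply]
  have s2 := LinearMap.congr_fun B2 ((TensorProduct.map ρ ρ) ((Coalgebra.comul (R := K) (A := C)) x))
  simp only [LinearMap.comp_apply, LinearEquiv.coe_coe] at s2
  rw [s2]
  have s3 := LinearMap.congr_fun C3 ((TensorProduct.map ρ ρ) ((Coalgebra.comul (R := K) (A := C)) x))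
  simp only [LinearMap.comp_apply, LinearEquiv.coe_coe] at s3
  rw [s3]
  have s4 := LinearMap.congr_fun M4 ((Coalgebra.comul (R := K) (A := C)) x)
  simp only [LinearMap.comp_apply, LinearEquiv.coe_coe] at s4
  rw [s4]
  have s5 := LinearMap.congr_fun C5
    ((TensorProduct.map LinearMap.id (TensorProduct.map LinearMap.id ρ)) ((TensorProduct.map ρ ρ) ((Coalgebra.comul (R := K) (A := C)) x)))
  simp only [LinearMap.comp_apply, LinearEquiv.coe_coe] at s5
  rw [s5]
  have s6 := LinearMap.congr_fun M6 ((TensorProduct.map ρ ρ) ((Coalgebra.comul (R := K) (A := C)) x))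
  simp only [LinearMap.comp_apply, LinearEquiv.coe_coe] at s6
  rw [s6]
  have s7 := LinearMap.congr_fun M8
    (((TensorProduct.tensorTensorTensorComm K H C H C).toLinearMap) ((TensorProduct.map ρ ρ) ((Coalgebra.comul (R := K) (A := C)) x)))
  simp only [LinearMap.comp_apply, LinearEquiv.coe_coe] at s7
  rw [s7]
  have s8 := LinearMap.congr_fun hcompΔ x
  simp only [LinearMap.comp_apply, LinearEquiv.coe_coe] at s8
  rw [← s8]
  have s9 := LinearMap.congr_fun M9 (ρ x)
  simp only [LinearMap.comp_apply, LinearEquiv.coe_coe] at s9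
  rw [s9]
  -- now goal : mul' (map id (PL ∘ map id ρ ∘ Δ) (ρ x)) = algebraMap (counit x)
  have s10 : TensorProduct.map (LinearMap.id : H →ₗ[K] H) (((LinearMap.mul' K H) ∘ₗ TensorProduct.map (HopfAlgebra.antipode (R := K) (A := H)) LinearMap.id ∘ₗ TensorProduct.map (LinearMap.mul' K H) α ∘ₗ (TensorProduct.assoc K H H C).symm.toLinearMap ∘ₗ TensorProduct.map α (LinearMap.id : H ⊗[K] C →ₗ[K] H ⊗[K] C)) ∘ₗ TensorProduct.map LinearMap.id ρ ∘ₗ (Coalgebra.comul (R := K) (A := C))) =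
      TensorProduct.map (LinearMap.id : H →ₗ[K] H) (Algebra.linearMap K H) ∘ₗ TensorProduct.map LinearMap.id (Coalgebra.counit (R := K) (A := C)) := by
    rw [← TensorProduct.map_comp, LinearMap.id_comp]
    congr 1
    apply LinearMap.ext
    intro y
    simp only [LinearMap.comp_apply]
    exact HP y
  rw [LinearMap.congr_fun s10 (ρ x)]
  simp only [LinearMap.comp_apply]
  have s11 := LinearMap.congr_fun M7 ((TensorProduct.map LinearMap.id (Coalgebra.counit (R := K) (A := C))) (ρ x))
  simp only [LinearMap.comp_apply, LinearEquiv.coe_coe] at s11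
  rw [s11]
  have s12 := LinearMap.congr_fun hcompε x
  simp only [LinearMap.comp_apply, LinearEquiv.coe_coe, Algebra.linearMap_apply] at s12
  exact s12

end Main

/-- Let `C` be a coalgebra in `{}^H_H 𝒴𝒟` and `α : C → H` a dual
normalized Sweedler 1-cocycle.  Then `α` is convolution invertible with inverse
`α'(x) = x₍₋₁₎ S(α(x₍₀₎))`. -/
theorem sweedler_cocycle_inverse {K H C : Type*} [CommRing K] [Ring H]
    [HopfAlgebra K H] [AddCommGroup C] [Module K C] [Coalgebra K C]
    (act : (H ⊗[K] C) →ₗ[K] C) (ρ : C →ₗ[K] H ⊗[K] C)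
    -- module axioms:
    (hact_one : ∀ z : C, act ((1 : H) ⊗ₜ[K] z) = z)
    (hact_mul : ∀ (g h : H) (z : C),
      act ((g * h) ⊗ₜ[K] z) = act (g ⊗ₜ[K] act (h ⊗ₜ[K] z)))
    -- coaction axioms:
    (hcounit : (TensorProduct.lid K C).toLinearMap ∘ₗ
        (TensorProduct.map Coalgebra.counit LinearMap.id) ∘ₗ ρ = LinearMap.id)
    (hcoassoc : (TensorProduct.map Coalgebra.comul LinearMap.id) ∘ₗ ρ =
      (TensorProduct.assoc K H H C).symm.toLinearMap ∘ₗ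
        (TensorProduct.map LinearMap.id ρ) ∘ₗ ρ)
    -- the Yetter-Drinfeld compatibility condition, in the equivalent form
    -- `h₁ z₍₋₁₎ ⊗ h₂ · z₍₀₎ = (h₁ · z)₍₋₁₎ h₂ ⊗ (h₁ · z)₍₀₎`:
    (hyd : (TensorProduct.map (LinearMap.mul' K H) act) ∘ₗ
        (TensorProduct.tensorTensorTensorComm K H H H C).toLinearMap ∘ₗ
        (TensorProduct.map Coalgebra.comul ρ) =
      (TensorProduct.map ((LinearMap.mul' K H) ∘ₗ (TensorProduct.comm K H H).toLinearMap)
          LinearMap.id) ∘ₗ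
        (TensorProduct.assoc K H H C).symm.toLinearMap ∘ₗ
        (TensorProduct.map LinearMap.id ρ) ∘ₗ
        (TensorProduct.map LinearMap.id act) ∘ₗ
        (TensorProduct.assoc K H H C).toLinearMap ∘ₗ
        (TensorProduct.map (TensorProduct.comm K H H).toLinearMap LinearMap.id) ∘ₗ
        (TensorProduct.map Coalgebra.comul LinearMap.id))
    -- `Δ_C` and `ε_C` are morphisms in the category:
    (hΔact : (Coalgebra.comul (R := K) (A := C)) ∘ₗ act =
      (TensorProduct.map act act) ∘ₗ
        (TensorProduct.tensorTensorTensorComm K H H C C).toLinearMap ∘ₗ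
        (TensorProduct.map Coalgebra.comul Coalgebra.comul))
    (hεact : ∀ (h : H) (z : C), Coalgebra.counit (R := K) (act (h ⊗ₜ[K] z)) =
      Coalgebra.counit (R := K) h * Coalgebra.counit (R := K) z)
    -- `C` is a comodule coalgebra:
    (hcompΔ : (TensorProduct.map LinearMap.id Coalgebra.comul) ∘ₗ ρ =
      (TensorProduct.map (LinearMap.mul' K H) LinearMap.id) ∘ₗ
        (TensorProduct.tensorTensorTensorComm K H C H C).toLinearMap ∘ₗ
        (TensorProduct.map ρ ρ) ∘ₗ Coalgebra.comul)
    (hcompε : (TensorProduct.rid K H).toLinearMap ∘ₗ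
        (TensorProduct.map LinearMap.id Coalgebra.counit) ∘ₗ ρ =
      (Algebra.linearMap K H) ∘ₗ Coalgebra.counit)
    -- `α` is a dual normalized Sweedler 1-cocycle:
    (α : C →ₗ[K] H)
    (hΔα : (Coalgebra.comul (R := K) (A := H)) ∘ₗ α =
      (TensorProduct.map (LinearMap.mul' K H) α) ∘ₗ
        (TensorProduct.assoc K H H C).symm.toLinearMap ∘ₗ
        (TensorProduct.map α ρ) ∘ₗ Coalgebra.comul)
    (hεα : (Coalgebra.counit (R := K) (A := H)) ∘ₗ α = Coalgebra.counit) :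
    convH α ((LinearMap.mul' K H) ∘ₗ
        (TensorProduct.map LinearMap.id ((HopfAlgebra.antipode (R := K)) ∘ₗ α)) ∘ₗ ρ) =
      (Algebra.linearMap K H) ∘ₗ Coalgebra.counit ∧
    convH ((LinearMap.mul' K H) ∘ₗ
        (TensorProduct.map LinearMap.id ((HopfAlgebra.antipode (R := K)) ∘ₗ α)) ∘ₗ ρ) α =
      (Algebra.linearMap K H) ∘ₗ Coalgebra.counit := by
  exact ⟨dir1 ρ α hΔα hεα, dir2 ρ α hcounit hcoassoc hcompΔ hcompε hΔα hεα⟩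
end

section
/- (q-Chu–Vandermonde) For a field element $q$ and nonnegative integers $a, b, r$: $\sum_{k=0}^{r} \binom{a}{k}_q \binom{b}{r-k}_q \, q^{(a-k)(r-k)} = \binom{a+b}{r}_q$. -/
/-- The Gaussian binomial coefficient, defined by the `q`-Pascal recursion
`C(n+1, k+1)_q = C(n, k)_q + q^(k+1) * C(n, k+1)_q`; it vanishes for `k > n`. -/
def qbinom {K : Type*} [CommRing K] (q : K) : ℕ → ℕ → K
  | _, 0 => 1
  | 0, _ + 1 => 0
  | n + 1, k + 1 => qbinom q n k + q ^ (k + 1) * qbinom q n (k + 1)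

lemma qbinom_zero_right {K : Type*} [CommRing K] (q : K) (n : ℕ) : qbinom q n 0 = 1 := by
  cases n <;> rfl

lemma qbinom_eq_zero {K : Type*} [CommRing K] (q : K) {n k : ℕ} (h : n < k) :
    qbinom q n k = 0 := by
  induction n generalizing k with
  | zero =>
    cases k with
    | zero => omega
    | succ k => rfl
  | succ n ih =>
    cases k with
    | zero => omega
    | succ k =>
      rw [qbinom, ih (by omega), ih (by omega)]
      ring

/-- q-Chu–Vandermonde: for a field element `q` and natural numbers
`a, b, r`: `∑_{k=0}^{r} C(a,k)_q C(b,r-k)_q q^((a-k)(r-k)) = C(a+b, r)_q`. -/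
theorem q_chu_vandermonde {K : Type*} [Field K] (q : K) (a b r : ℕ) :
    ∑ k ∈ Finset.range (r + 1),
        qbinom q a k * qbinom q b (r - k) * q ^ ((a - k) * (r - k)) =
      qbinom q (a + b) r := by
  induction a generalizing r with
  | zero =>
    rw [Finset.sum_eq_single 0]
    · simp [qbinom_zero_right]
    · intro k hk hk0
      cases k with
      | zero => exact absurd rfl hk0
      | succ k => simp [qbinom]
    · intro h; simp at h
  | succ a ih =>
    cases r with
    | zero => simp [qbinom_zero_right]
    | succ s =>
      have key : ∀ k ∈ Finset.range (s + 1 + 1),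
          qbinom q (a + 1) k * qbinom q b (s + 1 - k) * q ^ ((a + 1 - k) * (s + 1 - k)) =
          (if k = 0 then 0 else
            qbinom q a (k - 1) * qbinom q b (s + 1 - k) * q ^ ((a - (k - 1)) * (s + 1 - k)))
          + q ^ (s + 1) *
            (qbinom q a k * qbinom q b (s + 1 - k) * q ^ ((a - k) * (s + 1 - k))) := by
        intro k hk
        simp only [Finset.mem_range] at hk
        cases k with
        | zero =>
          simp only [if_pos rfl, ite_true, zero_add, qbinom_zero_right, Nat.sub_zero, one_mul, add_zero]
          rw [show (a + 1) * (s + 1) = a * (s + 1) + (s + 1) by ring, pow_add]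
          ring
        | succ k =>
          rw [if_neg (Nat.succ_ne_zero k), Nat.add_sub_cancel, qbinom,
            show a + 1 - (k + 1) = a - k by omega]
          rcases le_or_gt (k + 1) a with hka | hka
          · have hak : a - k = a - (k + 1) + 1 := by omega
            have h1 : (k + 1) + (a - k) * (s + 1 - (k + 1))
                = (s + 1) + (a - (k + 1)) * (s + 1 - (k + 1)) := by
              have hm : k + 1 + (s + 1 - (k + 1)) = s + 1 := by omega
              calc (k + 1) + (a - k) * (s + 1 - (k + 1))
                  = (k + 1) + (a - (k + 1) + 1) * (s + 1 - (k + 1)) := by rw [hak]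
                _ = (k + 1 + (s + 1 - (k + 1))) + (a - (k + 1)) * (s + 1 - (k + 1)) := by
                    ring
                _ = (s + 1) + (a - (k + 1)) * (s + 1 - (k + 1)) := by rw [hm]
            have expand : q ^ (k + 1) * q ^ ((a - k) * (s + 1 - (k + 1)))
                = q ^ (s + 1) * q ^ ((a - (k + 1)) * (s + 1 - (k + 1))) := by
              rw [← pow_add, ← pow_add, h1]
            linear_combination
              qbinom q a (k + 1) * qbinom q b (s + 1 - (k + 1)) * expand
          · rw [qbinom_eq_zero q hka]
            ring
      rw [Finset.sum_congr rfl key, Finset.sum_add_distrib, ← Finset.mul_sum,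
        ih (s + 1), Finset.sum_range_succ']
      simp only [if_pos rfl, Nat.succ_ne_zero, ite_false, ite_true, if_neg,
        Nat.add_sub_cancel, add_zero]
      have hss : ∀ k : ℕ, s + 1 - (k + 1) = s - k := by intro k; omega
      simp only [hss]
      rw [ih s]
      rw [show a + 1 + b = a + b + 1 by omega, qbinom]
end
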